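/- Fix a nonzero real number q and integers k ≥ 1, r ≥ 1, and let A = A(ℂP³_θ). Given complex matrices B₁, B₂ ∈ M_{k×k}(ℂ), I ∈ M_{k×r}(ℂ), J ∈ M_{r×k}(ℂ), write M* for the conjugate transpose of a complex matrix M, and define the block matrices over A: σ ∈ M_{(2k+r)×k}(A), the vertical stack of the blocks B₁w₃ − B₂*w₄ + q·w₁·1_k, B₂w₃ + B₁*w₄ + q⁻¹·w₂·1_k, and Jw₃ + I*w₄; and τ ∈ M_{k×(2k+r)}(A), the horizontal row of the blocks −q⁻²B₂w₃ − q⁻²B₁*w₄ − q⁻¹·w₂·1_k, B₁w₃ − B₂*w₄ + q⁻¹·w₁·1_k, and Iw₃ − J*w₄. Set E_c = B₁B₂ − q⁻²B₂B₁ + IJ and E_r = B₁B₁* − q⁻²B₁*B₁ + q⁻²B₂B₂* − B₂*B₂ + II* − J*J. Then τ·σ = E_c·w₃² − E_c*·w₄² + E_r·w₃w₄ in M_{k×k}(A). In particular, τ·σ = 0 if and only if both the braided complex ADHM equation E_c = 0 and the braided real ADHM equation E_r = 0 hold. -/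

import Mathlib

noncomputable section

open FreeAlgebra Matrix

/-- The relations of the homogeneous coordinate algebra `A(ℂP³_θ)` of the noncommutative
twistor space: `w₁w₂ = q²w₂w₁` together with `wᵢwₖ = wₖwᵢ` for `k ∈ {3,4}` and all `i`
(generators indexed by `0, 1, 2, 3`). -/
inductive P3Rel (q : ℝ) : FreeAlgebra ℂ (Fin 4) → FreeAlgebra ℂ (Fin 4) → Prop
  | r12 : P3Rel q (ι ℂ 0 * ι ℂ 1) (((q : ℂ)) ^ 2 • (ι ℂ 1 * ι ℂ 0))
  | central (i k : Fin 4) (h : k = 2 ∨ k = 3) : P3Rel q (ι ℂ i * ι ℂ k) (ι ℂ k * ι ℂ i)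

/-- The homogeneous coordinate algebra `A = A(ℂP³_θ)`. -/
abbrev P3Alg (q : ℝ) := RingQuot (P3Rel q)

/-- The generators `w₁, w₂, w₃, w₄` of `A(ℂP³_θ)` (indexed by `0, 1, 2, 3`). -/
def wP3 (q : ℝ) (i : Fin 4) : P3Alg q := RingQuot.mkAlgHom ℂ (P3Rel q) (ι ℂ i)

/-- For a complex matrix `M` and an algebra element `a`, the matrix `M·a` with
entries `M_{uv} a`. -/
def cMat {m n : Type*} {A : Type*} [Semiring A] [Algebra ℂ A]
    (M : Matrix m n ℂ) (a : A) : Matrix m n A :=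
  M.map fun c => algebraMap ℂ A c * a

/-- The self-conjugate monad differential `σ` on `ℂP³_θ`: the vertical stack of the blocks
`B₁w₃ − B₂*w₄ + q·w₁·1_k`, `B₂w₃ + B₁*w₄ + q⁻¹·w₂·1_k` and `Jw₃ + I*w₄`. -/
def σTw (q : ℝ) (k r : ℕ) (B1 B2 : Matrix (Fin k) (Fin k) ℂ)
    (I : Matrix (Fin k) (Fin r) ℂ) (J : Matrix (Fin r) (Fin k) ℂ) :
    Matrix (Fin k ⊕ (Fin k ⊕ Fin r)) (Fin k) (P3Alg q) :=
  Matrix.fromRows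
    (cMat B1 (wP3 q 2) + cMat (-B2ᴴ) (wP3 q 3)
      + cMat ((q : ℂ) • (1 : Matrix (Fin k) (Fin k) ℂ)) (wP3 q 0))
    (Matrix.fromRows
      (cMat B2 (wP3 q 2) + cMat B1ᴴ (wP3 q 3)
        + cMat (((q : ℂ))⁻¹ • (1 : Matrix (Fin k) (Fin k) ℂ)) (wP3 q 1))
      (cMat J (wP3 q 2) + cMat Iᴴ (wP3 q 3)))

/-- The self-conjugate monad differential `τ` on `ℂP³_θ`: the horizontal row of the
blocks `−q⁻²B₂w₃ − q⁻²B₁*w₄ − q⁻¹·w₂·1_k`, `B₁w₃ − B₂*w₄ + q⁻¹·w₁·1_k` and `Iw₃ − J*w₄`. -/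
def τTw (q : ℝ) (k r : ℕ) (B1 B2 : Matrix (Fin k) (Fin k) ℂ)
    (I : Matrix (Fin k) (Fin r) ℂ) (J : Matrix (Fin r) (Fin k) ℂ) :
    Matrix (Fin k) (Fin k ⊕ (Fin k ⊕ Fin r)) (P3Alg q) :=
  Matrix.fromCols
    (cMat (-((q : ℂ) ^ 2)⁻¹ • B2) (wP3 q 2) + cMat (-((q : ℂ) ^ 2)⁻¹ • B1ᴴ) (wP3 q 3)
      + cMat (-((q : ℂ))⁻¹ • (1 : Matrix (Fin k) (Fin k) ℂ)) (wP3 q 1))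
    (Matrix.fromCols
      (cMat B1 (wP3 q 2) + cMat (-B2ᴴ) (wP3 q 3)
        + cMat (((q : ℂ))⁻¹ • (1 : Matrix (Fin k) (Fin k) ℂ)) (wP3 q 0))
      (cMat I (wP3 q 2) + cMat (-Jᴴ) (wP3 q 3)))

lemma wC (q : ℝ) (i k : Fin 4) (h : k = 2 ∨ k = 3) :
    wP3 q i * wP3 q k = wP3 q k * wP3 q i := by
  rw [wP3, wP3, ← _root_.map_mul, ← _root_.map_mul]
  exact RingQuot.mkAlgHom_rel ℂ (P3Rel.central i k h)

lemma wUV (q : ℝ) : wP3 q 0 * wP3 q 1 = ((q:ℂ)^2) • (wP3 q 1 * wP3 q 0) := by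
  have h := RingQuot.mkAlgHom_rel ℂ (P3Rel.r12 (q := q))
  rw [_root_.map_mul, _root_.map_smul, _root_.map_mul] at h
  rw [wP3, wP3, h]

section cm
variable {m n p : Type*} {A : Type*} [Semiring A] [Algebra ℂ A]

lemma cMat_apply (M : Matrix m n ℂ) (a : A) (i j) :
    cMat M a i j = algebraMap ℂ A (M i j) * a := rfl

lemma cMat_mul [Fintype n] (M : Matrix m n ℂ) (N : Matrix n p ℂ) (a b : A) :
    cMat M a * cMat N b = cMat (M * N) (a * b) := by
  ext i j
  simp only [Matrix.mul_apply, cMat_apply, map_sum, Finset.sum_mul]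
  refine Finset.sum_congr rfl fun u _ => ?_
  rw [_root_.map_mul, mul_assoc, ← mul_assoc a, ← Algebra.commutes (N u j) a,
    mul_assoc, ← mul_assoc, ← mul_assoc]

lemma cMat_add (M N : Matrix m n ℂ) (a : A) : cMat (M + N) a = cMat M a + cMat N a := by
  ext i j; simp [cMat_apply, Matrix.add_apply, add_mul]

lemma cMat_sub {A : Type*} [Ring A] [Algebra ℂ A] (M N : Matrix m n ℂ) (a : A) :
    cMat (M - N) a = cMat M a - cMat N a := by
  ext i j; simp [cMat_apply, Matrix.sub_apply, sub_mul]

lemma cMat_neg {A : Type*} [Ring A] [Algebra ℂ A] (M : Matrix m n ℂ) (a : A) :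
    cMat (-M) a = - cMat M a := by
  ext i j; simp [cMat_apply]

lemma cMat_smul (c : ℂ) (M : Matrix m n ℂ) (a : A) : cMat (c • M) a = c • cMat M a := by
  ext i j; simp [cMat_apply, Algebra.smul_def, mul_assoc]

lemma cMat_smul_right (c : ℂ) (M : Matrix m n ℂ) (a : A) : cMat M (c • a) = c • cMat M a := by
  ext i j; simp [cMat_apply, Algebra.smul_def]
  rw [← mul_assoc, ← mul_assoc, Algebra.commutes]

lemma cMat_zero (a : A) : cMat (0 : Matrix m n ℂ) a = 0 := by
  ext i j; simp [cMat_apply]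
end cm

def evalF (s t : ℂ) : FreeAlgebra ℂ (Fin 4) →ₐ[ℂ] ℂ :=
  FreeAlgebra.lift ℂ (![0, 0, s, t])

lemma evalF_rel (q : ℝ) (s t : ℂ) : ∀ ⦃x y⦄, P3Rel q x y → evalF s t x = evalF s t y := by
  intro x y h
  induction h with
  | r12 => simp [evalF]
  | central i k h => simp [evalF, mul_comm]

def evalP3 (q : ℝ) (s t : ℂ) : P3Alg q →ₐ[ℂ] ℂ :=
  RingQuot.liftAlgHom ℂ ⟨evalF s t, evalF_rel q s t⟩

lemma evalP3_w (q : ℝ) (s t : ℂ) (i : Fin 4) :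
    evalP3 q s t (wP3 q i) = ![0, 0, s, t] i := by
  rw [wP3, evalP3, RingQuot.liftAlgHom_mkAlgHom_apply, evalF, FreeAlgebra.lift_ι_apply]

lemma evalP3_cMat {m n : Type*} (q : ℝ) (s t : ℂ) (M : Matrix m n ℂ) (a : P3Alg q) (i j) :
    evalP3 q s t (cMat M a i j) = M i j * evalP3 q s t a := by
  rw [cMat_apply, _root_.map_mul, AlgHom.commutes]
  simp


/-- `τ·σ = E_c·w₃² − E_c*·w₄² + E_r·w₃w₄`, where `E_c` and `E_r` are respectively the
braided complex and real ADHM expressions; in particular `τ·σ = 0` iff both braided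
ADHM equations hold. -/
theorem tau_mul_sigma_eq_real_ADHM (q : ℝ) (hq : q ≠ 0) (k r : ℕ) (hk : 1 ≤ k) (hr : 1 ≤ r)
    (B1 B2 : Matrix (Fin k) (Fin k) ℂ) (I : Matrix (Fin k) (Fin r) ℂ)
    (J : Matrix (Fin r) (Fin k) ℂ) :
    τTw q k r B1 B2 I J * σTw q k r B1 B2 I J
        = cMat (B1 * B2 - ((q : ℂ) ^ 2)⁻¹ • (B2 * B1) + I * J) (wP3 q 2 * wP3 q 2)
          - cMat (B1 * B2 - ((q : ℂ) ^ 2)⁻¹ • (B2 * B1) + I * J)ᴴ (wP3 q 3 * wP3 q 3)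
          + cMat (B1 * B1ᴴ - ((q : ℂ) ^ 2)⁻¹ • (B1ᴴ * B1) + ((q : ℂ) ^ 2)⁻¹ • (B2 * B2ᴴ)
              - B2ᴴ * B2 + I * Iᴴ - Jᴴ * J) (wP3 q 2 * wP3 q 3) ∧
      (τTw q k r B1 B2 I J * σTw q k r B1 B2 I J = 0 ↔
        (B1 * B2 - ((q : ℂ) ^ 2)⁻¹ • (B2 * B1) + I * J = 0 ∧
          B1 * B1ᴴ - ((q : ℂ) ^ 2)⁻¹ • (B1ᴴ * B1) + ((q : ℂ) ^ 2)⁻¹ • (B2 * B2ᴴ)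
              - B2ᴴ * B2 + I * Iᴴ - Jᴴ * J = 0)) := by
  have hqC : (q : ℂ) ≠ 0 := Complex.ofReal_ne_zero.mpr hq
  have h02 := wC q 0 2 (Or.inl rfl)
  have h12 := wC q 1 2 (Or.inl rfl)
  have h32 := wC q 3 2 (Or.inl rfl)
  have h03 := wC q 0 3 (Or.inr rfl)
  have h13 := wC q 1 3 (Or.inr rfl)
  have key : τTw q k r B1 B2 I J * σTw q k r B1 B2 I J
        = cMat (B1 * B2 - ((q : ℂ) ^ 2)⁻¹ • (B2 * B1) + I * J) (wP3 q 2 * wP3 q 2)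
          - cMat (B1 * B2 - ((q : ℂ) ^ 2)⁻¹ • (B2 * B1) + I * J)ᴴ (wP3 q 3 * wP3 q 3)
          + cMat (B1 * B1ᴴ - ((q : ℂ) ^ 2)⁻¹ • (B1ᴴ * B1) + ((q : ℂ) ^ 2)⁻¹ • (B2 * B2ᴴ)
              - B2ᴴ * B2 + I * Iᴴ - Jᴴ * J) (wP3 q 2 * wP3 q 3) := by
    rw [τTw, σTw, Matrix.fromCols_mul_fromRows, Matrix.fromCols_mul_fromRows]
    simp only [add_mul, mul_add, Matrix.add_mul, Matrix.mul_add, cMat_mul, h02, h12, h32, h03, h13, wUV,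
      cMat_smul_right, cMat_smul, cMat_neg, cMat_add, cMat_sub,
      Matrix.smul_mul, Matrix.mul_smul, Matrix.neg_mul, Matrix.mul_neg,
      Matrix.one_mul, Matrix.mul_one, smul_smul, neg_smul, smul_neg, neg_neg, neg_mul, mul_neg,
      Matrix.conjTranspose_add, Matrix.conjTranspose_sub, Matrix.conjTranspose_smul,
      Matrix.conjTranspose_mul, Matrix.conjTranspose_conjTranspose,
      star_inv₀, star_pow, Complex.star_def, Complex.conj_ofReal]
    match_scalars
    all_goals (try ring1)
    all_goals (field_simp; try ring1)
  refine ⟨key, ?_⟩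
  have extract : ∀ (Ec Er : Matrix (Fin k) (Fin k) ℂ),
      cMat Ec (wP3 q 2 * wP3 q 2) - cMat Ecᴴ (wP3 q 3 * wP3 q 3)
        + cMat Er (wP3 q 2 * wP3 q 3) = 0 → Ec = 0 ∧ Er = 0 := by
    intro Ec Er h
    have hEc : Ec = 0 := by
      ext i j
      have h1 := congrArg (evalP3 q 1 0) (congrFun (congrFun h i) j)
      simpa [Matrix.sub_apply, Matrix.add_apply, evalP3_cMat, _root_.map_mul,
        evalP3_w] using h1
    refine ⟨hEc, ?_⟩
    rw [hEc, Matrix.conjTranspose_zero, cMat_zero, cMat_zero] at h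
    simp only [sub_zero, zero_add, zero_sub, neg_zero] at h
    ext i j
    have h1 := congrArg (evalP3 q 1 1) (congrFun (congrFun h i) j)
    simpa [evalP3_cMat, _root_.map_mul, evalP3_w] using h1
  constructor
  · intro h0
    exact extract _ _ (key ▸ h0)
  · rintro ⟨h1, h2⟩
    rw [key, h1, h2, Matrix.conjTranspose_zero, cMat_zero, cMat_zero, cMat_zero]
    simp
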